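/- For complex numbers q₁, q₂ with |q₁| < 1, |q₂| < 1 (or suitable analytic continuation), the identity (q₁^{-1}z; q₁, q₂q₁^{-1})_∞ · (q₂^{-1}z; q₁q₂^{-1}, q₂)_∞ = (z; q₁, q₂q₁^{-1})_∞ · (z; q₁q₂^{-1}, q₂)_∞ holds as an identity of formal power series in z with coefficients in the field of rational functions in q₁, q₂. -/

import Mathlib

open scoped BigOperators

/-- Coefficients of the double q-Pochhammer symbol, viewed as a formal power series:
`(z; p, q)_∞ = exp(−∑_{n≥1} z^n / (n(1−p^n)(1−q^n)))`.  The coefficients are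
characterized by the differential recursion
`n·c_n = −∑_{k=1}^{n} c_{n−k} / ((1−p^k)(1−q^k))`, `c_0 = 1`. -/
noncomputable def dPochCoeff {K : Type*} [Field K] (p q : K) : ℕ → K
  | 0 => 1
  | n + 1 => (-(n + 1 : K)⁻¹) *
      ∑ j ∈ (Finset.range (n + 1)).attach,
        dPochCoeff p q j.1 *
          ((1 - p ^ (n + 1 - j.1)) * (1 - q ^ (n + 1 - j.1)))⁻¹
  termination_by n => n
  decreasing_by exact Finset.mem_range.mp j.2

/-- The double q-Pochhammer symbol `(z; p, q)_∞` as a formal power series in `z`. -/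
noncomputable def dPoch {K : Type*} [Field K] (p q : K) : PowerSeries K :=
  PowerSeries.mk (dPochCoeff p q)

/-- The field of rational functions in `q₁, q₂` (over `ℚ`). -/
abbrev RatFunc2 : Type := FractionRing (MvPolynomial (Fin 2) ℚ)

/-- `q₁` as a rational function. -/
noncomputable def qv1 : RatFunc2 :=
  algebraMap (MvPolynomial (Fin 2) ℚ) RatFunc2 (MvPolynomial.X 0)

/-- `q₂` as a rational function. -/
noncomputable def qv2 : RatFunc2 :=
  algebraMap (MvPolynomial (Fin 2) ℚ) RatFunc2 (MvPolynomial.X 1)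

/- ################ Auxiliary material ################ -/

open PowerSeries

/-- The "logarithmic derivative kernel" of `dPoch p q`. -/
noncomputable def dKer {K : Type*} [Field K] (p q : K) : PowerSeries K :=
  PowerSeries.mk fun n => -((1 - p ^ (n+1)) * (1 - q ^ (n+1)))⁻¹

section CharZeroField

variable {K : Type*} [Field K] [CharZero K]

lemma dPoch_deriv (p q : K) :
    derivative K (dPoch p q) = dPoch p q * dKer p q := by
  ext n
  rw [coeff_derivative, coeff_mul, Finset.Nat.sum_antidiagonal_eq_sum_range_succ_mk]
  simp only [dPoch, dKer, coeff_mk]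
  rw [dPochCoeff]
  rw [Finset.sum_attach (Finset.range (n+1))
      (fun j => dPochCoeff p q j * ((1 - p ^ (n + 1 - j)) * (1 - q ^ (n + 1 - j)))⁻¹)]
  have hx : ((n:K) + 1) ≠ 0 := by exact_mod_cast Nat.succ_ne_zero n
  rw [neg_mul, neg_mul, inv_mul_eq_div, div_mul_cancel₀ _ hx]
  rw [← Finset.sum_neg_distrib]
  refine Finset.sum_congr rfl fun k hk => ?_
  have hk' : k ≤ n := Nat.lt_succ_iff.mp (Finset.mem_range.mp hk)
  have : n - k + 1 = n + 1 - k := by omega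
  rw [this, mul_neg]

/-- Uniqueness for the ODE `F' = F·T` with fixed initial value, over a char-0 field. -/
lemma eq_of_deriv_rel (T F G : PowerSeries K)
    (hF : derivative K F = F * T) (hG : derivative K G = G * T)
    (h0 : PowerSeries.coeff 0 F = PowerSeries.coeff 0 G) : F = G := by
  ext n
  induction n using Nat.strong_induction_on with
  | _ n ih =>
    obtain _ | n := n
    · exact h0
    · have hx : ((n:K) + 1) ≠ 0 := by exact_mod_cast Nat.succ_ne_zero n
      have h1 : coeff (n+1) F * ((n:K)+1) = coeff (n+1) G * ((n:K)+1) := by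
        rw [show coeff (n+1) F * ((n:K)+1) = coeff n (derivative K F) by
              rw [coeff_derivative],
            show coeff (n+1) G * ((n:K)+1) = coeff n (derivative K G) by
              rw [coeff_derivative],
            hF, hG, coeff_mul, coeff_mul]
        refine Finset.sum_congr rfl fun p hp => ?_
        have := Finset.HasAntidiagonal.mem_antidiagonal.mp hp
        rw [ih p.1 (by omega)]
      exact mul_right_cancel₀ hx h1

end CharZeroField

section AnyField

variable {K : Type*} [Field K]

lemma derivative_rescale (c : K) (f : PowerSeries K) :
    derivative K (rescale c f) = C c * rescale c (derivative K f) := by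
  ext n
  simp only [coeff_derivative, coeff_rescale, coeff_C_mul]
  ring

lemma derivative_mul' (f g : PowerSeries K) :
    derivative K (f * g) = f * derivative K g + g * derivative K f := by
  simpa [smul_eq_mul] using (derivative K).leibniz f g

/-- The scalar identity behind the shift identity. -/
lemma key_field (a b : K) (ha : a ≠ 0) (hb : b ≠ 0) (h1 : (1:K) - a ≠ 0)
    (h2 : (1:K) - b ≠ 0) (hab : a ≠ b) :
    a⁻¹ * -(((1-a) * (1-b*a⁻¹))⁻¹) + b⁻¹ * -(((1-a*b⁻¹) * (1-b))⁻¹)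
      = -(((1-a) * (1-b*a⁻¹))⁻¹) + -(((1-a*b⁻¹) * (1-b))⁻¹) := by
  have e1 : (1:K) - b*a⁻¹ = (a - b) * a⁻¹ := by field_simp
  have e2 : (1:K) - a*b⁻¹ = (b - a) * b⁻¹ := by field_simp
  have hab1 : a - b ≠ 0 := sub_ne_zero.mpr hab
  have hab2 : b - a ≠ 0 := sub_ne_zero.mpr (Ne.symm hab)
  rw [e1, e2]
  field_simp
  ring

end AnyField

instance : CharZero RatFunc2 :=
  charZero_of_injective_algebraMap
    (IsFractionRing.injective (MvPolynomial (Fin 2) ℚ) RatFunc2)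

lemma inj2 : Function.Injective (algebraMap (MvPolynomial (Fin 2) ℚ) RatFunc2) :=
  IsFractionRing.injective _ _

lemma qv1_ne_zero : qv1 ≠ 0 := by
  intro h
  exact MvPolynomial.X_ne_zero 0 (inj2 (by simpa [qv1] using h))

lemma qv2_ne_zero : qv2 ≠ 0 := by
  intro h
  exact MvPolynomial.X_ne_zero 1 (inj2 (by simpa [qv2] using h))

lemma qv1_pow_ne_one (m : ℕ) : qv1 ^ (m+1) ≠ 1 := by
  intro h
  have h' : (MvPolynomial.X 0 : MvPolynomial (Fin 2) ℚ) ^ (m+1) = 1 := by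
    apply inj2; rw [map_pow, map_one]; exact h
  have := congrArg (MvPolynomial.eval (fun _ => (2:ℚ))) h'
  simp at this
  have h2 : (1:ℚ) < 2 ^ (m+1) := one_lt_pow₀ one_lt_two (Nat.succ_ne_zero m)
  rw [this] at h2
  exact lt_irrefl _ h2

lemma qv2_pow_ne_one (m : ℕ) : qv2 ^ (m+1) ≠ 1 := by
  intro h
  have h' : (MvPolynomial.X 1 : MvPolynomial (Fin 2) ℚ) ^ (m+1) = 1 := by
    apply inj2; rw [map_pow, map_one]; exact h
  have := congrArg (MvPolynomial.eval (fun _ => (2:ℚ))) h'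
  simp at this
  have h2 : (1:ℚ) < 2 ^ (m+1) := one_lt_pow₀ one_lt_two (Nat.succ_ne_zero m)
  rw [this] at h2
  exact lt_irrefl _ h2

lemma qv_pow_ne (m : ℕ) : qv1 ^ (m+1) ≠ qv2 ^ (m+1) := by
  intro h
  have h' : (MvPolynomial.X 0 : MvPolynomial (Fin 2) ℚ) ^ (m+1)
      = MvPolynomial.X 1 ^ (m+1) := by
    apply inj2; rw [map_pow, map_pow]; exact h
  have := congrArg (MvPolynomial.eval (fun i : Fin 2 => if i = 0 then (2:ℚ) else 1)) h'
  simp at this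
  have h2 : (1:ℚ) < 2 ^ (m+1) := one_lt_pow₀ one_lt_two (Nat.succ_ne_zero m)
  rw [this] at h2
  exact lt_irrefl _ h2

/-- The key kernel identity. -/
lemma key_kernel :
    C qv1⁻¹ * rescale qv1⁻¹ (dKer qv1 (qv2 * qv1⁻¹))
      + C qv2⁻¹ * rescale qv2⁻¹ (dKer (qv1 * qv2⁻¹) qv2)
    = dKer qv1 (qv2 * qv1⁻¹) + dKer (qv1 * qv2⁻¹) qv2 := by
  ext n
  simp only [map_add, coeff_C_mul, coeff_rescale, dKer, coeff_mk, mul_pow, inv_pow]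
  have ea : qv1⁻¹ * (qv1 ^ n)⁻¹ = (qv1 ^ (n+1))⁻¹ := by
    rw [← mul_inv, ← pow_succ']
  have eb : qv2⁻¹ * (qv2 ^ n)⁻¹ = (qv2 ^ (n+1))⁻¹ := by
    rw [← mul_inv, ← pow_succ']
  rw [← mul_assoc, ← mul_assoc, ea, eb]
  exact key_field (qv1 ^ (n+1)) (qv2 ^ (n+1))
    (pow_ne_zero _ qv1_ne_zero) (pow_ne_zero _ qv2_ne_zero)
    (sub_ne_zero.mpr (Ne.symm (qv1_pow_ne_one n)))
    (sub_ne_zero.mpr (Ne.symm (qv2_pow_ne_one n)))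
    (qv_pow_ne n)

/-- As formal power series in `z` with coefficients in the field of rational
functions in `q₁, q₂`,
`(q₁⁻¹z; q₁, q₂q₁⁻¹)_∞ · (q₂⁻¹z; q₁q₂⁻¹, q₂)_∞ = (z; q₁, q₂q₁⁻¹)_∞ · (z; q₁q₂⁻¹, q₂)_∞`. -/
theorem dPoch_shift_identity :
    PowerSeries.rescale qv1⁻¹ (dPoch qv1 (qv2 * qv1⁻¹)) *
        PowerSeries.rescale qv2⁻¹ (dPoch (qv1 * qv2⁻¹) qv2) =
      dPoch qv1 (qv2 * qv1⁻¹) * dPoch (qv1 * qv2⁻¹) qv2 := by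
  set A := dPoch qv1 (qv2 * qv1⁻¹) with hA
  set B := dPoch (qv1 * qv2⁻¹) qv2 with hB
  set sA := dKer qv1 (qv2 * qv1⁻¹) with hsA
  set sB := dKer (qv1 * qv2⁻¹) qv2 with hsB
  apply eq_of_deriv_rel (sA + sB)
  · rw [derivative_mul', derivative_rescale, derivative_rescale,
      hA, hB, dPoch_deriv, dPoch_deriv, ← hA, ← hB, ← hsA, ← hsB,
      map_mul, map_mul, ← key_kernel]
    ring
  · rw [derivative_mul', hA, hB, dPoch_deriv, dPoch_deriv, ← hA, ← hB, ← hsA, ← hsB]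
    ring
  · simp [coeff_mul, coeff_rescale]
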